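/- Let d ≥ 1, N ≥ 1, and let w_1, …, w_N : ℝ^d → ℂ be measurable functions such that for every m ∈ ℕ, sup_{x∈ℝ^d} (1+|x|)^m |w_j(x)| < ∞. Let B : ℝ^d → M_d(ℝ) be continuous, antisymmetric-valued, with sup_{j,k,w} |B_{jk}(w)| ≤ ε. For γ ∈ ℤ^d and x, y ∈ ℝ^d set ω_γ(x,y) := exp(i Φ_B(γ,x,y)), where Φ_B(γ,x,y) is the flux of B through the triangle with vertices γ, x, y. Define K(x,y) := Σ_{γ∈ℤ^d} Σ_{j=1}^N w_j(x−γ) conj(w_j(y−γ)) and K_ε(x,y) := Σ_{γ∈ℤ^d} Σ_{j=1}^N ω_γ(x,y) w_j(x−γ) conj(w_j(y−γ)) (both series converge absolutely). Then for every m ∈ ℕ there exists a constant C_m < ∞, depending only on m, d, N and the decay constants of the w_j, such that sup_{x,y∈ℝ^d} (1+|x−y|)^m |K_ε(x,y) − K(x,y)| ≤ C_m ε. -/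

import Mathlib

open MeasureTheory Complex

/-- A lattice point of `ℤ^d`, viewed as a vector in `ℝ^d`. -/
noncomputable def latticeEmbed {d : ℕ} (γ : Fin d → ℤ) : EuclideanSpace ℝ (Fin d) :=
  WithLp.toLp 2 (fun i => (γ i : ℝ))

/-- The standard 2-simplex `{(s,t) : 0 ≤ s, 0 ≤ t, s + t ≤ 1}` in `ℝ × ℝ`. -/
def simplex2 : Set (ℝ × ℝ) := {p | 0 ≤ p.1 ∧ 0 ≤ p.2 ∧ p.1 + p.2 ≤ 1}

/-- The flux of a matrix field `B` through the oriented triangle with vertices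
`a`, `b`, `c`, via the affine parametrization over the standard simplex. -/
noncomputable def triangleFlux {d : ℕ}
    (B : EuclideanSpace ℝ (Fin d) → Matrix (Fin d) (Fin d) ℝ)
    (a b c : EuclideanSpace ℝ (Fin d)) : ℝ :=
  ∫ p in simplex2,
    ∑ j : Fin d, ∑ k : Fin d,
      B (a + p.1 • (b - a) + p.2 • (c - a)) j k * (b - a) j * (c - a) k

namespace MagneticAux

/-- The basic one-dimensional decay weight. -/
noncomputable def gfun (k : ℤ) : ℝ := ((1 + |(k : ℝ)|)⁻¹) ^ 2

lemma gfun_nonneg (k : ℤ) : 0 ≤ gfun k := by unfold gfun; positivity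

lemma summable_nat_gfun : Summable (fun n : ℕ => ((1 + (n : ℝ))⁻¹) ^ 2) := by
  have h : Summable (fun n : ℕ => 1 / (n : ℝ) ^ 2) :=
    Real.summable_one_div_nat_pow.mpr one_lt_two
  have h1 := (summable_nat_add_iff 1).mpr h
  refine h1.congr fun n => ?_
  push_cast
  rw [one_div, ← inv_pow, add_comm]

lemma gfun_summable : Summable gfun := by
  apply Summable.of_nat_of_neg
  · exact summable_nat_gfun.congr fun n => by simp [gfun]
  · exact summable_nat_gfun.congr fun n => by simp [gfun]

lemma summable_pi_prod (f : ℤ → ℝ) (h0 : ∀ k, 0 ≤ f k) (hf : Summable f) :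
    ∀ n : ℕ, Summable (fun γ : Fin n → ℤ => ∏ i, f (γ i)) := by
  intro n
  induction n with
  | zero => exact Summable.of_finite
  | succ n ih =>
      have hmul : Summable (fun p : ℤ × (Fin n → ℤ) => f p.1 * ∏ i, f (p.2 i)) :=
        Summable.mul_of_nonneg (f := f) (g := fun γ : Fin n → ℤ => ∏ i, f (γ i))
          hf ih (fun k => h0 k) (fun γ => Finset.prod_nonneg fun i _ => h0 _)
      refine ((Fin.consEquiv (fun _ : Fin (n + 1) => ℤ)).summable_iff).mp
        (hmul.congr fun p => ?_)
      simp [Fin.consEquiv, Function.comp, Fin.prod_univ_succ]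

lemma coord_abs_le_norm {d : ℕ} (v : EuclideanSpace ℝ (Fin d)) (i : Fin d) :
    |v i| ≤ ‖v‖ := by
  rw [EuclideanSpace.norm_eq, ← Real.sqrt_sq_eq_abs]
  apply Real.sqrt_le_sqrt
  have := Finset.single_le_sum (f := fun j => ‖v j‖ ^ 2)
    (fun j _ => sq_nonneg _) (Finset.mem_univ i)
  simpa [Real.norm_eq_abs, sq_abs] using this

lemma measurableSet_simplex2 : MeasurableSet simplex2 := by
  have : simplex2 = {p : ℝ × ℝ | 0 ≤ p.1} ∩ ({p | 0 ≤ p.2} ∩ {p | p.1 + p.2 ≤ 1}) := rfl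
  rw [this]
  exact (measurableSet_le measurable_const measurable_fst).inter
    ((measurableSet_le measurable_const measurable_snd).inter
      (measurableSet_le (measurable_fst.add measurable_snd) measurable_const))

lemma vol_simplex2_le : volume simplex2 ≤ 1 := by
  have hsub : simplex2 ⊆ Set.Icc ((0 : ℝ), (0 : ℝ)) (1, 1) := by
    rintro ⟨s, t⟩ ⟨h1, h2, h3⟩
    exact ⟨⟨h1, h2⟩, ⟨by dsimp at *; linarith, by dsimp at *; linarith⟩⟩
  calc volume simplex2 ≤ volume (Set.Icc ((0 : ℝ), (0 : ℝ)) (1, 1)) := measure_mono hsub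
    _ = 1 := by
        rw [Set.Icc_prod_eq, Measure.volume_eq_prod, Measure.prod_prod]
        simp [Real.volume_Icc]

lemma flux_abs_le {d : ℕ} {B : EuclideanSpace ℝ (Fin d) → Matrix (Fin d) (Fin d) ℝ} {ε : ℝ}
    (hε : 0 ≤ ε) (hB : ∀ j k v, |B v j k| ≤ ε) (a b c : EuclideanSpace ℝ (Fin d)) :
    |triangleFlux B a b c| ≤ ε * (d : ℝ) ^ 2 * ‖b - a‖ * ‖c - a‖ := by
  have key : ∀ p ∈ simplex2,
      ‖∑ j : Fin d, ∑ k : Fin d,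
        B (a + p.1 • (b - a) + p.2 • (c - a)) j k * (b - a) j * (c - a) k‖
        ≤ ε * (d : ℝ) ^ 2 * ‖b - a‖ * ‖c - a‖ := by
    intro p _
    rw [Real.norm_eq_abs]
    calc |∑ j : Fin d, ∑ k : Fin d,
          B (a + p.1 • (b - a) + p.2 • (c - a)) j k * (b - a) j * (c - a) k|
        ≤ ∑ j : Fin d, |∑ k : Fin d,
            B (a + p.1 • (b - a) + p.2 • (c - a)) j k * (b - a) j * (c - a) k| :=
          Finset.abs_sum_le_sum_abs _ _
      _ ≤ ∑ j : Fin d, ∑ k : Fin d,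
            |B (a + p.1 • (b - a) + p.2 • (c - a)) j k * (b - a) j * (c - a) k| :=
          Finset.sum_le_sum fun j _ => Finset.abs_sum_le_sum_abs _ _
      _ ≤ ∑ j : Fin d, ∑ k : Fin d, ε * ‖b - a‖ * ‖c - a‖ := by
          refine Finset.sum_le_sum fun j _ => Finset.sum_le_sum fun k _ => ?_
          rw [abs_mul, abs_mul]
          exact mul_le_mul
            (mul_le_mul (hB j k _) (coord_abs_le_norm _ j) (abs_nonneg _)
              hε)
            (coord_abs_le_norm _ k) (abs_nonneg _)
            (mul_nonneg hε (norm_nonneg _))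
      _ = ε * (d : ℝ) ^ 2 * ‖b - a‖ * ‖c - a‖ := by
          simp [Finset.sum_const]
          ring
  have hvol : volume simplex2 < ⊤ := lt_of_le_of_lt vol_simplex2_le (by norm_num)
  have hint := norm_setIntegral_le_of_norm_le_const hvol key
  have hM : 0 ≤ ε * (d : ℝ) ^ 2 * ‖b - a‖ * ‖c - a‖ := by positivity
  have htr : (volume simplex2).toReal ≤ 1 :=
    ENNReal.toReal_le_of_le_ofReal one_pos.le (by simpa using vol_simplex2_le)
  calc |triangleFlux B a b c|
      = ‖∫ p in simplex2, ∑ j : Fin d, ∑ k : Fin d,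
          B (a + p.1 • (b - a) + p.2 • (c - a)) j k * (b - a) j * (c - a) k‖ :=
        (Real.norm_eq_abs _).symm
    _ ≤ (ε * (d : ℝ) ^ 2 * ‖b - a‖ * ‖c - a‖) * (volume simplex2).toReal := hint
    _ ≤ (ε * (d : ℝ) ^ 2 * ‖b - a‖ * ‖c - a‖) * 1 := by
        exact mul_le_mul_of_nonneg_left htr hM
    _ = ε * (d : ℝ) ^ 2 * ‖b - a‖ * ‖c - a‖ := mul_one _

lemma exp_I_sub_one_le (t : ℝ) : ‖Complex.exp (Complex.I * t) - 1‖ ≤ 2 * |t| := by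
  have habs : ‖Complex.I * t‖ = |t| := by
    rw [norm_mul, Complex.norm_I, Complex.norm_real, one_mul, Real.norm_eq_abs]
  by_cases h : |t| ≤ 1
  · have := Complex.norm_exp_sub_one_le (x := Complex.I * t) (by rwa [habs])
    rwa [habs] at this
  · push_neg at h
    have h1 : ‖Complex.exp (Complex.I * t)‖ = 1 := by
      rw [mul_comm]; exact Complex.norm_exp_ofReal_mul_I t
    calc ‖Complex.exp (Complex.I * t) - 1‖
        ≤ ‖Complex.exp (Complex.I * t)‖ + ‖(1 : ℂ)‖ := norm_sub_le _ _
      _ = 2 := by rw [h1]; norm_num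
      _ ≤ 2 * |t| := by nlinarith

end MagneticAux

open MagneticAux

/-- The magnetically modified band projection kernel `K_ε` differs from the unperturbed
kernel `K` by `O(ε)`, with rapid off-diagonal decay, uniformly in the field `B` of
size `ε`. -/
theorem magnetic_kernel_comparison (d N : ℕ) (hd : 1 ≤ d) (hN : 1 ≤ N)
    (D : ℕ → ℝ) (m : ℕ) :
    ∃ C : ℝ, ∀ (w : Fin N → EuclideanSpace ℝ (Fin d) → ℂ),
      (∀ j, Measurable (w j)) →
      (∀ (r : ℕ) (j : Fin N) (x : EuclideanSpace ℝ (Fin d)),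
        (1 + ‖x‖) ^ r * ‖w j x‖ ≤ D r) →
      ∀ ε : ℝ, 0 ≤ ε →
      ∀ (B : EuclideanSpace ℝ (Fin d) → Matrix (Fin d) (Fin d) ℝ),
        Continuous B →
        (∀ v j k, B v j k = - B v k j) →
        (∀ j k v, |B v j k| ≤ ε) →
      (∀ x y : EuclideanSpace ℝ (Fin d),
        Summable (fun γ : Fin d → ℤ =>
          ‖∑ j : Fin N, w j (x - latticeEmbed γ) *
            (starRingEnd ℂ) (w j (y - latticeEmbed γ))‖) ∧
        Summable (fun γ : Fin d → ℤ =>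
          ‖∑ j : Fin N, Complex.exp (Complex.I * (triangleFlux B (latticeEmbed γ) x y : ℝ)) *
            w j (x - latticeEmbed γ) * (starRingEnd ℂ) (w j (y - latticeEmbed γ))‖)) ∧
      ∀ x y : EuclideanSpace ℝ (Fin d),
        (1 + ‖x - y‖) ^ m *
          ‖(∑' γ : Fin d → ℤ, ∑ j : Fin N,
              Complex.exp (Complex.I * (triangleFlux B (latticeEmbed γ) x y : ℝ)) *
                w j (x - latticeEmbed γ) * (starRingEnd ℂ) (w j (y - latticeEmbed γ))) -
            (∑' γ : Fin d → ℤ, ∑ j : Fin N,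
              w j (x - latticeEmbed γ) * (starRingEnd ℂ) (w j (y - latticeEmbed γ)))‖ ≤
          C * ε := by
  classical
  set r : ℕ := m + 1 + 2 * d with hr
  set Dr : ℝ := max (D r) 0 with hDrdef
  have hDr : 0 ≤ Dr := le_max_right _ _
  set G : (Fin d → ℤ) → ℝ := fun γ => ∏ i, gfun (γ i) with hGdef
  have hG : Summable G := summable_pi_prod gfun gfun_nonneg gfun_summable d
  set S : ℝ := ∑' γ : Fin d → ℤ, G γ with hSdef
  have hS0 : 0 ≤ S := tsum_nonneg fun γ => Finset.prod_nonneg fun i _ => gfun_nonneg _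
  refine ⟨2 * (d : ℝ) ^ 2 * N * Dr ^ 2 * 4 ^ d * S, ?_⟩
  intro w hwmeas hD ε hε B hBcont hBanti hBle
  -- basic decay bounds
  have hwr : ∀ (j : Fin N) (v : EuclideanSpace ℝ (Fin d)),
      (1 + ‖v‖) ^ r * ‖w j v‖ ≤ Dr := fun j v => (hD r j v).trans (le_max_left _ _)
  have key : ∀ x y : EuclideanSpace ℝ (Fin d),
      Summable (fun γ : Fin d → ℤ =>
        ‖∑ j : Fin N, w j (x - latticeEmbed γ) *
          (starRingEnd ℂ) (w j (y - latticeEmbed γ))‖) ∧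
      Summable (fun γ : Fin d → ℤ =>
        ‖∑ j : Fin N, Complex.exp (Complex.I * (triangleFlux B (latticeEmbed γ) x y : ℝ)) *
          w j (x - latticeEmbed γ) * (starRingEnd ℂ) (w j (y - latticeEmbed γ))‖) ∧
      (1 + ‖x - y‖) ^ m *
        ‖(∑' γ : Fin d → ℤ, ∑ j : Fin N,
            Complex.exp (Complex.I * (triangleFlux B (latticeEmbed γ) x y : ℝ)) *
              w j (x - latticeEmbed γ) * (starRingEnd ℂ) (w j (y - latticeEmbed γ))) -
          (∑' γ : Fin d → ℤ, ∑ j : Fin N,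
            w j (x - latticeEmbed γ) * (starRingEnd ℂ) (w j (y - latticeEmbed γ)))‖ ≤
        2 * (d : ℝ) ^ 2 * N * Dr ^ 2 * 4 ^ d * S * ε := by
    intro x y
    set a : (Fin d → ℤ) → ℂ := fun γ =>
      ∑ j : Fin N, Complex.exp (Complex.I * (triangleFlux B (latticeEmbed γ) x y : ℝ)) *
        w j (x - latticeEmbed γ) * (starRingEnd ℂ) (w j (y - latticeEmbed γ)) with ha
    set b : (Fin d → ℤ) → ℂ := fun γ =>
      ∑ j : Fin N, w j (x - latticeEmbed γ) *
        (starRingEnd ℂ) (w j (y - latticeEmbed γ)) with hb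
    set X : (Fin d → ℤ) → ℝ := fun γ => ‖x - latticeEmbed γ‖ with hX
    set Y : (Fin d → ℤ) → ℝ := fun γ => ‖y - latticeEmbed γ‖ with hY
    have hX0 : ∀ γ, 0 ≤ X γ := fun γ => norm_nonneg _
    have hY0 : ∀ γ, 0 ≤ Y γ := fun γ => norm_nonneg _
    set c : Fin d → ℤ := fun i => round (x i) with hc
    set P : (Fin d → ℤ) → ℝ := fun γ => ∏ i, gfun (γ i - c i) with hP
    have hP0 : ∀ γ, 0 ≤ P γ := fun γ => Finset.prod_nonneg fun i _ => gfun_nonneg _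
    -- summability and tsum of P
    have hPe : ∀ γ : Fin d → ℤ,
        (G ∘ (Equiv.piCongrRight fun i : Fin d => Equiv.subRight (c i))) γ = P γ := by
      intro γ
      simp [G, P, Function.comp, Equiv.piCongrRight, Equiv.subRight]
    have hP_sum : Summable P := by
      refine Summable.congr ?_ hPe
      exact ((Equiv.piCongrRight fun i : Fin d =>
        Equiv.subRight (c i)).summable_iff).mpr hG
    have hP_tsum : ∑' γ, P γ = S := by
      rw [hSdef]
      rw [← (Equiv.piCongrRight fun i : Fin d => Equiv.subRight (c i)).tsum_eq G]
      exact (tsum_congr fun γ => (hPe γ).symm)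
    -- the coordinate comparison
    have hcoord : ∀ (γ : Fin d → ℤ) (i : Fin d),
        (1 : ℝ) ≤ 4 * gfun (γ i - c i) * (1 + |x i - (γ i : ℝ)|) ^ 2 := by
      intro γ i
      have h05 : |x i - (c i : ℝ)| ≤ 1 / 2 := by
        rw [hc]; exact abs_sub_round (x i)
      have habs : |((γ i - c i : ℤ) : ℝ)| ≤ |x i - (γ i : ℝ)| + 1 / 2 := by
        push_cast
        calc |(γ i : ℝ) - (c i : ℝ)| ≤ |(γ i : ℝ) - x i| + |x i - (c i : ℝ)| :=
            abs_sub_le _ _ _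
          _ ≤ |x i - (γ i : ℝ)| + 1 / 2 := by rw [abs_sub_comm]; linarith
      have ht0 : 0 ≤ |x i - (γ i : ℝ)| := abs_nonneg _
      have habs0 : 0 ≤ |((γ i - c i : ℤ) : ℝ)| := abs_nonneg _
      have hpos : (0 : ℝ) < 1 + |((γ i - c i : ℤ) : ℝ)| := by linarith
      have hsq : (1 + |((γ i - c i : ℤ) : ℝ)|) ^ 2 ≤ 4 * (1 + |x i - (γ i : ℝ)|) ^ 2 := by
        nlinarith
      have heq : (1 : ℝ) =
          ((1 + |((γ i - c i : ℤ) : ℝ)|)⁻¹) ^ 2 * (1 + |((γ i - c i : ℤ) : ℝ)|) ^ 2 := by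
        field_simp
      calc (1 : ℝ) = ((1 + |((γ i - c i : ℤ) : ℝ)|)⁻¹) ^ 2 *
            (1 + |((γ i - c i : ℤ) : ℝ)|) ^ 2 := heq
        _
          ≤ ((1 + |((γ i - c i : ℤ) : ℝ)|)⁻¹) ^ 2 * (4 * (1 + |x i - (γ i : ℝ)|) ^ 2) := by
            exact mul_le_mul_of_nonneg_left hsq (by positivity)
        _ = 4 * gfun (γ i - c i) * (1 + |x i - (γ i : ℝ)|) ^ 2 := by
            unfold gfun; ring
    have hxicoord : ∀ (γ : Fin d → ℤ) (i : Fin d),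
        |x i - (γ i : ℝ)| ≤ X γ := by
      intro γ i
      have : (x - latticeEmbed γ) i = x i - (γ i : ℝ) := by simp [latticeEmbed]
      rw [← this]
      exact coord_abs_le_norm (x - latticeEmbed γ) i
    have hcoordP : ∀ γ : Fin d → ℤ, (1 : ℝ) ≤ 4 ^ d * P γ * (1 + X γ) ^ (2 * d) := by
      intro γ
      have hprod : (1 : ℝ) ≤
          ∏ i, (4 * gfun (γ i - c i) * (1 + |x i - (γ i : ℝ)|) ^ 2) := by
        have := Finset.prod_le_prod (s := (Finset.univ : Finset (Fin d)))
          (f := fun _ => (1 : ℝ))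
          (g := fun i => 4 * gfun (γ i - c i) * (1 + |x i - (γ i : ℝ)|) ^ 2)
          (fun i _ => zero_le_one) (fun i _ => hcoord γ i)
        simpa using this
      have hsplit : ∏ i, (4 * gfun (γ i - c i) * (1 + |x i - (γ i : ℝ)|) ^ 2)
          = 4 ^ d * P γ * ∏ i, (1 + |x i - (γ i : ℝ)|) ^ 2 := by
        rw [Finset.prod_mul_distrib, Finset.prod_mul_distrib, Finset.prod_const]
        simp [P, Finset.card_univ]
      have hXb : ∏ i, (1 + |x i - (γ i : ℝ)|) ^ 2 ≤ (1 + X γ) ^ (2 * d) := by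
        calc ∏ i, (1 + |x i - (γ i : ℝ)|) ^ 2 ≤ ∏ _i : Fin d, (1 + X γ) ^ 2 :=
            Finset.prod_le_prod (fun i _ => by positivity)
              (fun i _ => pow_le_pow_left₀ (by positivity)
                (by linarith [hxicoord γ i]) 2)
          _ = (1 + X γ) ^ (2 * d) := by
              rw [Finset.prod_const, ← pow_mul, Finset.card_univ]
              simp [mul_comm]
      calc (1 : ℝ) ≤ 4 ^ d * P γ * ∏ i, (1 + |x i - (γ i : ℝ)|) ^ 2 := by
            rw [← hsplit]; exact hprod
        _ ≤ 4 ^ d * P γ * (1 + X γ) ^ (2 * d) := by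
            refine mul_le_mul_of_nonneg_left hXb ?_
            have := hP0 γ
            positivity
    -- norm bound on b
    have hbw : ∀ γ, ‖b γ‖ ≤
        ∑ j : Fin N, ‖w j (x - latticeEmbed γ)‖ * ‖w j (y - latticeEmbed γ)‖ := by
      intro γ
      refine (norm_sum_le _ _).trans (le_of_eq (Finset.sum_congr rfl fun j _ => ?_))
      rw [norm_mul, RCLike.norm_conj]
    have h2 : ∀ γ, (1 + X γ) ^ r * (1 + Y γ) ^ r * ‖b γ‖ ≤ N * Dr ^ 2 := by
      intro γ
      have h1X : (0 : ℝ) ≤ (1 + X γ) ^ r := by positivity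
      have h1Y : (0 : ℝ) ≤ (1 + Y γ) ^ r := by positivity
      calc (1 + X γ) ^ r * (1 + Y γ) ^ r * ‖b γ‖
          ≤ (1 + X γ) ^ r * (1 + Y γ) ^ r *
            ∑ j : Fin N, ‖w j (x - latticeEmbed γ)‖ * ‖w j (y - latticeEmbed γ)‖ := by
            exact mul_le_mul_of_nonneg_left (hbw γ) (by positivity)
        _ = ∑ j : Fin N, ((1 + X γ) ^ r * ‖w j (x - latticeEmbed γ)‖) *
              ((1 + Y γ) ^ r * ‖w j (y - latticeEmbed γ)‖) := by
            rw [Finset.mul_sum]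
            exact Finset.sum_congr rfl fun j _ => by ring
        _ ≤ ∑ _j : Fin N, Dr * Dr := by
            refine Finset.sum_le_sum fun j _ => ?_
            exact mul_le_mul (hwr j _) (hwr j _)
              (mul_nonneg h1Y (norm_nonneg _)) hDr
        _ = N * Dr ^ 2 := by
            rw [Finset.sum_const, Finset.card_univ, nsmul_eq_mul, Fintype.card_fin]
            ring
    -- the main per-site estimate
    have hE : ∀ γ, (1 + X γ) ^ (m + 1) * (1 + Y γ) ^ (m + 1) * ‖b γ‖ ≤
        N * Dr ^ 2 * (4 ^ d * P γ) := by
      intro γ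
      have h1Xle : (1 : ℝ) ≤ 1 + X γ := by linarith [hX0 γ]
      have h1Yle : (1 : ℝ) ≤ 1 + Y γ := by linarith [hY0 γ]
      have hnn : (0 : ℝ) ≤ (1 + X γ) ^ (m + 1) * (1 + Y γ) ^ (m + 1) * ‖b γ‖ := by
        positivity
      calc (1 + X γ) ^ (m + 1) * (1 + Y γ) ^ (m + 1) * ‖b γ‖
          ≤ ((1 + X γ) ^ (m + 1) * (1 + Y γ) ^ (m + 1) * ‖b γ‖) *
              (4 ^ d * P γ * (1 + X γ) ^ (2 * d)) :=
            le_mul_of_one_le_right hnn (hcoordP γ)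
        _ = (4 ^ d * P γ) *
              (((1 + X γ) ^ (m + 1) * (1 + X γ) ^ (2 * d)) *
                (1 + Y γ) ^ (m + 1) * ‖b γ‖) := by ring
        _ = (4 ^ d * P γ) * ((1 + X γ) ^ r * (1 + Y γ) ^ (m + 1) * ‖b γ‖) := by
            rw [← pow_add]
        _ ≤ (4 ^ d * P γ) * ((1 + X γ) ^ r * (1 + Y γ) ^ r * ‖b γ‖) := by
            have hYpow : (1 + Y γ) ^ (m + 1) ≤ (1 + Y γ) ^ r :=
              pow_le_pow_right₀ h1Yle (by omega)
            have h4P : (0 : ℝ) ≤ 4 ^ d * P γ := by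
              have := hP0 γ; positivity
            refine mul_le_mul_of_nonneg_left ?_ h4P
            have h1 : (0 : ℝ) ≤ (1 + X γ) ^ r := by positivity
            have := mul_le_mul_of_nonneg_right
              (mul_le_mul_of_nonneg_left hYpow h1) (norm_nonneg (b γ))
            linarith
        _ ≤ (4 ^ d * P γ) * (N * Dr ^ 2) := by
            refine mul_le_mul_of_nonneg_left (h2 γ) ?_
            have := hP0 γ; positivity
        _ = N * Dr ^ 2 * (4 ^ d * P γ) := by ring
    have hb_le : ∀ γ, ‖b γ‖ ≤ N * Dr ^ 2 * (4 ^ d * P γ) := by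
      intro γ
      refine le_trans ?_ (hE γ)
      have h1X : (1 : ℝ) ≤ (1 + X γ) ^ (m + 1) := one_le_pow₀ (by linarith [hX0 γ])
      have h1Y : (1 : ℝ) ≤ (1 + Y γ) ^ (m + 1) := one_le_pow₀ (by linarith [hY0 γ])
      have hAB : (1 : ℝ) ≤ (1 + X γ) ^ (m + 1) * (1 + Y γ) ^ (m + 1) := by nlinarith
      exact le_mul_of_one_le_left (norm_nonneg _) hAB
    have hb_sum : Summable (fun γ => ‖b γ‖) := by
      refine Summable.of_nonneg_of_le (fun γ => norm_nonneg _)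
        ?_ (hP_sum.mul_left ((N : ℝ) * Dr ^ 2 * 4 ^ d))
      exact fun γ => (hb_le γ).trans (le_of_eq (by ring))
    -- relation between a and b
    have haeq : ∀ γ, a γ =
        Complex.exp (Complex.I * (triangleFlux B (latticeEmbed γ) x y : ℝ)) * b γ := by
      intro γ
      simp only [ha, hb, Finset.mul_sum]
      exact Finset.sum_congr rfl fun j _ => mul_assoc _ _ _
    have hexpnorm : ∀ t : ℝ, ‖Complex.exp (Complex.I * (t : ℂ))‖ = 1 := by
      intro t
      rw [Complex.norm_exp]
      simp
    have hanorm : ∀ γ, ‖a γ‖ = ‖b γ‖ := by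
      intro γ
      rw [haeq γ, norm_mul, hexpnorm, one_mul]
    have ha_sum : Summable (fun γ => ‖a γ‖) :=
      hb_sum.congr fun γ => (hanorm γ).symm
    refine ⟨hb_sum, ha_sum, ?_⟩
    -- the difference estimate
    have hdiff : ∀ γ, (1 + ‖x - y‖) ^ m * ‖a γ - b γ‖ ≤
        (2 * (d : ℝ) ^ 2 * N * Dr ^ 2 * 4 ^ d * ε) * P γ := by
      intro γ
      have habe : a γ - b γ =
          (Complex.exp (Complex.I * (triangleFlux B (latticeEmbed γ) x y : ℝ)) - 1) * b γ := by
        rw [haeq γ]; ring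
      have hΦ : |triangleFlux B (latticeEmbed γ) x y| ≤
          ε * (d : ℝ) ^ 2 * (1 + X γ) * (1 + Y γ) := by
        refine (flux_abs_le hε hBle (latticeEmbed γ) x y).trans ?_
        have h1 : ‖x - latticeEmbed γ‖ = X γ := rfl
        have h2' : ‖y - latticeEmbed γ‖ = Y γ := rfl
        rw [h1, h2']
        have hd2 : (0 : ℝ) ≤ ε * (d : ℝ) ^ 2 := by positivity
        nlinarith [hX0 γ, hY0 γ]
      have hexp : ‖Complex.exp (Complex.I * (triangleFlux B (latticeEmbed γ) x y : ℝ)) - 1‖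
          ≤ 2 * (ε * (d : ℝ) ^ 2 * (1 + X γ) * (1 + Y γ)) := by
        refine (exp_I_sub_one_le _).trans ?_
        linarith [hΦ]
      have hnorm : ‖a γ - b γ‖ ≤
          2 * (ε * (d : ℝ) ^ 2 * (1 + X γ) * (1 + Y γ)) * ‖b γ‖ := by
        rw [habe, norm_mul]
        exact mul_le_mul_of_nonneg_right hexp (norm_nonneg _)
      have hxy : (1 + ‖x - y‖) ^ m ≤ (1 + X γ) ^ m * (1 + Y γ) ^ m := by
        rw [← mul_pow]
        refine pow_le_pow_left₀ (by positivity) ?_ m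
        have hsplit : x - y = (x - latticeEmbed γ) - (y - latticeEmbed γ) := by abel
        have htri : ‖x - y‖ ≤ X γ + Y γ := by
          rw [hsplit]; exact norm_sub_le _ _
        nlinarith [hX0 γ, hY0 γ]
      calc (1 + ‖x - y‖) ^ m * ‖a γ - b γ‖
          ≤ ((1 + X γ) ^ m * (1 + Y γ) ^ m) *
              (2 * (ε * (d : ℝ) ^ 2 * (1 + X γ) * (1 + Y γ)) * ‖b γ‖) := by
            refine mul_le_mul hxy hnorm (norm_nonneg _) ?_
            positivity
        _ = (2 * (d : ℝ) ^ 2 * ε) *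
              ((1 + X γ) ^ (m + 1) * (1 + Y γ) ^ (m + 1) * ‖b γ‖) := by ring
        _ ≤ (2 * (d : ℝ) ^ 2 * ε) * (N * Dr ^ 2 * (4 ^ d * P γ)) := by
            exact mul_le_mul_of_nonneg_left (hE γ) (by positivity)
        _ = (2 * (d : ℝ) ^ 2 * N * Dr ^ 2 * 4 ^ d * ε) * P γ := by ring
    have hbound_sum : Summable (fun γ => (2 * (d : ℝ) ^ 2 * N * Dr ^ 2 * 4 ^ d * ε) * P γ) :=
      hP_sum.mul_left _
    have hdiff_sum : Summable (fun γ => (1 + ‖x - y‖) ^ m * ‖a γ - b γ‖) :=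
      Summable.of_nonneg_of_le (fun γ => by positivity) hdiff hbound_sum
    have hxym : (0 : ℝ) < (1 + ‖x - y‖) ^ m := by positivity
    have habn : Summable (fun γ => ‖a γ - b γ‖) :=
      (summable_mul_left_iff (ne_of_gt hxym)).mp hdiff_sum
    have hA : Summable a := Summable.of_norm ha_sum
    have hB' : Summable b := Summable.of_norm hb_sum
    calc (1 + ‖x - y‖) ^ m * ‖(∑' γ, a γ) - (∑' γ, b γ)‖
        = (1 + ‖x - y‖) ^ m * ‖∑' γ, (a γ - b γ)‖ := by rw [Summable.tsum_sub hA hB']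
      _ ≤ (1 + ‖x - y‖) ^ m * ∑' γ, ‖a γ - b γ‖ := by
          exact mul_le_mul_of_nonneg_left (norm_tsum_le_tsum_norm habn) (le_of_lt hxym)
      _ = ∑' γ, (1 + ‖x - y‖) ^ m * ‖a γ - b γ‖ := (tsum_mul_left).symm
      _ ≤ ∑' γ, (2 * (d : ℝ) ^ 2 * N * Dr ^ 2 * 4 ^ d * ε) * P γ :=
          Summable.tsum_le_tsum hdiff hdiff_sum hbound_sum
      _ = (2 * (d : ℝ) ^ 2 * N * Dr ^ 2 * 4 ^ d * ε) * ∑' γ, P γ := tsum_mul_left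
      _ = 2 * (d : ℝ) ^ 2 * N * Dr ^ 2 * 4 ^ d * S * ε := by rw [hP_tsum]; ring
  exact ⟨fun x y => ⟨(key x y).1, (key x y).2.1⟩, fun x y => (key x y).2.2⟩
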